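/- Every vertex of the Minkowski cell C_A of an (n,d)-type A arises as a total refinement of A: if v is a vertex of C_A = Σ_i conv{e_j : j ∈ A_i}, then there is an ordered partition P of [d] such that A|P is a total refinement (b_1,...,b_n) with v = Σ_i e_{b_i}. -/

import Mathlib

open Finset

/-- An `(n,d)`-type: an `n`-tuple of subsets of `[d]`. -/
abbrev NDType (n d : ℕ) := Fin n → Finset (Fin d)

/-- All entries nonempty. -/
def IsType {n d : ℕ} (A : NDType n d) : Prop := ∀ i, (A i).Nonempty

/-- A directed edge `u → v` of the comparability graph `CG(A,B)`:
for some coordinate `i`, `u ∈ A i`, `v ∈ B i`, and not both lie in `A i ∩ B i`. -/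
def DirEdge {n d : ℕ} (A B : NDType n d) (u v : Fin d) : Prop :=
  u ≠ v ∧ ∃ i, u ∈ A i ∧ v ∈ B i ∧ ¬ (u ∈ A i ∩ B i ∧ v ∈ A i ∩ B i)

/-- An undirected edge of `CG(A,B)`: both endpoints lie in some `A i ∩ B i`. -/
def UndirEdge {n d : ℕ} (A B : NDType n d) (u v : Fin d) : Prop :=
  u ≠ v ∧ ∃ i, u ∈ A i ∩ B i ∧ v ∈ A i ∩ B i

/-- A step of a directed walk in `CG(A,B)`: a directed edge in the right
direction, or an undirected edge. -/
def Step {n d : ℕ} (A B : NDType n d) (u v : Fin d) : Prop :=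
  DirEdge A B u v ∨ UndirEdge A B u v

/-- `CG(A,B)` contains a directed cycle: a closed walk all of whose directed
edges point in the walk direction, with at least one directed edge. -/
def HasDirectedCycle {n d : ℕ} (A B : NDType n d) : Prop :=
  ∃ (k : ℕ) (v : Fin (k + 1) → Fin d),
    v 0 = v (Fin.last k) ∧
    (∀ i : Fin k, Step A B (v i.castSucc) (v i.succ)) ∧
    (∃ i : Fin k, DirEdge A B (v i.castSucc) (v i.succ))

/-- The comparability graph `CG(A,B)` is acyclic. -/
def Acyclic {n d : ℕ} (A B : NDType n d) : Prop := ¬ HasDirectedCycle A B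

/-- An ordered partition of `[d]` into `k` (nonempty, ordered) parts. -/
def IsOrderedPartition {d k : ℕ} (P : Fin k → Finset (Fin d)) : Prop :=
  (∀ a, (P a).Nonempty) ∧ (∀ a b, a ≠ b → Disjoint (P a) (P b)) ∧
    (∀ j : Fin d, ∃ a, j ∈ P a)

/-- `B` is the refinement `A|P` of `A` with respect to the ordered partition `P`:
`B i = A i ∩ P (m i)` where `m i` is the least index with nonempty intersection. -/
def IsRefinementBy {n d k : ℕ} (A : NDType n d) (P : Fin k → Finset (Fin d))
    (B : NDType n d) : Prop :=
  ∀ i, ∃ a, (A i ∩ P a).Nonempty ∧ (∀ b, b < a → A i ∩ P b = ∅) ∧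
    B i = A i ∩ P a

/-- `B` is a refinement of `A` (with respect to some ordered partition). -/
def IsRefinement {n d : ℕ} (B A : NDType n d) : Prop :=
  ∃ (k : ℕ) (P : Fin k → Finset (Fin d)),
    IsOrderedPartition P ∧ IsRefinementBy A P B

/-- A total refinement: a refinement all of whose entries are singletons. -/
def IsTotalRefinement {n d : ℕ} (B A : NDType n d) : Prop :=
  IsRefinement B A ∧ ∀ i, ∃ j, B i = {j}

/-- A tope: a type all of whose entries are singletons. -/
def IsTope {n d : ℕ} (A : NDType n d) : Prop := ∀ i, ∃ j, A i = {j}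
open Pointwise

/-- The `j`-th standard basis vector of `ℝ^d`. -/
noncomputable def stdVec {d : ℕ} (j : Fin d) : Fin d → ℝ := Pi.single j 1

/-- The Minkowski cell `C_A = Σᵢ conv{e_j : j ∈ A i} ⊆ ℝ^d` of an `(n,d)`-type. -/
noncomputable def cell {n d : ℕ} (A : NDType n d) : Set (Fin d → ℝ) :=
  ∑ i : Fin n, convexHull ℝ (stdVec '' (A i : Set (Fin d)))

/-- The dilated simplex `nΔ^{d-1} ⊆ ℝ^d`. -/
def dilSimplex (n d : ℕ) : Set (Fin d → ℝ) :=
  {x | (∀ j, 0 ≤ x j) ∧ ∑ j, x j = (n : ℝ)}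

/-- A mixed subdivision of `nΔ^{d-1}`, encoded by the set of types of its cells:
all entries of a cell type are nonempty, the family of cells is closed under
faces (= refinements), any two cells intersect in the Minkowski sum of the
intersections of their summands, and the cells cover `nΔ^{d-1}`. -/
structure MixedSubdivision (n d : ℕ) where
  cells : Set (NDType n d)
  isType : ∀ A ∈ cells, IsType A
  refine_closed : ∀ A ∈ cells, ∀ B, IsRefinement B A → B ∈ cells
  inter : ∀ A ∈ cells, ∀ B ∈ cells,
    cell A ∩ cell B = cell (fun i => A i ∩ B i)
  covers : ⋃ A ∈ cells, cell A = dilSimplex n d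

/-- Every vertex (extreme point) of the Minkowski cell `C_A`
arises from a total refinement of `A`: it equals `Σᵢ e_{b i}` where
`(fun i => {b i}) = A|P` for some ordered partition `P` of `[d]`. -/
theorem vertex_is_total_refinement {n d : ℕ} (A : NDType n d) (hA : IsType A)
    (v : Fin d → ℝ) (hv : v ∈ Set.extremePoints ℝ (cell A)) :
    ∃ (k : ℕ) (P : Fin k → Finset (Fin d)) (b : Fin n → Fin d),
      IsOrderedPartition P ∧
      IsRefinementBy A P (fun i => ({b i} : Finset (Fin d))) ∧
      v = ∑ i, stdVec (b i) := by
  classical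
  set T : Set (Fin d → ℝ) :=
    (fun b : Fin n → Fin d => ∑ i, stdVec (b i)) '' {b | ∀ i, b i ∈ A i} with hTdef
  have hTfin : T.Finite := Set.Finite.image _ (Set.toFinite _)
  have hcell : cell A = convexHull ℝ T := by
    rw [cell, ← convexHull_sum]
    congr 1
    ext x
    simp only [Set.mem_fintype_sum, Set.mem_image, Set.mem_setOf_eq, hTdef, Finset.mem_coe]
    constructor
    · rintro ⟨g, hg, rfl⟩
      choose c hc1 hc2 using hg
      exact ⟨c, hc1, Finset.sum_congr rfl fun i _ => hc2 i⟩
    · rintro ⟨c, hc, rfl⟩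
      exact ⟨fun i => stdVec (c i), fun i => ⟨c i, hc i, rfl⟩, rfl⟩
  rw [hcell] at hv
  have hvT : v ∈ T := extremePoints_convexHull_subset hv
  obtain ⟨b, hb, hbv⟩ := hvT
  simp only [Set.mem_setOf_eq] at hb
  have hnot : v ∉ convexHull ℝ (T \ {v}) := by
    have h1 := (convex_convexHull ℝ T).mem_extremePoints_iff_mem_diff_convexHull_diff.mp hv
    intro hcon
    exact h1.2 (convexHull_mono (Set.diff_subset_diff_left (subset_convexHull ℝ T)) hcon)
  obtain ⟨f, u, hfu, huv⟩ := geometric_hahn_banach_closed_point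
    (convex_convexHull ℝ _) (((hTfin.sdiff (t := {v})).isCompact_convexHull ℝ).isClosed) hnot
  set W : Fin d → ℝ := fun j => f (stdVec j) with hWdef
  -- key strict maximality
  have key : ∀ i, ∀ j ∈ A i, j ≠ b i → W j < W (b i) := by
    intro i j hj hne
    set b' : Fin n → Fin d := Function.update b i j with hb'def
    have hupd : (fun i' => stdVec (b' i')) =
        Function.update (fun i' => stdVec (b i')) i (stdVec j) := by
      funext i'
      exact Function.apply_update (fun _ x => stdVec x) b i j i'
    have hsum' : (∑ i', stdVec (b' i'))
        = stdVec j + ∑ i' ∈ Finset.univ \ {i}, stdVec (b i') := by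
      rw [show (∑ i', stdVec (b' i')) = ∑ i', Function.update
          (fun i' => stdVec (b i')) i (stdVec j) i' from by rw [← hupd]]
      exact Finset.sum_update_of_mem (Finset.mem_univ i) _ _
    have hvsplit : v = stdVec (b i) + ∑ i' ∈ Finset.univ \ {i}, stdVec (b i') := by
      rw [← hbv]
      exact Finset.sum_eq_add_sum_sdiff_singleton_of_mem (Finset.mem_univ i) _
    have hx : (∑ i', stdVec (b' i')) = stdVec j + (v - stdVec (b i)) := by
      rw [hsum', hvsplit]; abel
    have hxT : (∑ i', stdVec (b' i')) ∈ T := by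
      refine ⟨b', fun i' => ?_, rfl⟩
      by_cases h : i' = i
      · subst h; simpa [hb'def] using hj
      · simpa [hb'def, Function.update_of_ne h] using hb i'
    have hxne : (∑ i', stdVec (b' i')) ≠ v := by
      rw [hx]
      intro hcon
      have h2 : stdVec j = stdVec (b i) := by linear_combination hcon
      have h3 : (1:ℝ) = 0 := by
        have := congrFun h2 j
        simpa [stdVec, Pi.single_eq_same, Pi.single_eq_of_ne hne] using this
      exact one_ne_zero h3
    have hlt : f (∑ i', stdVec (b' i')) < u := hfu _ (subset_convexHull ℝ _ ⟨hxT, hxne⟩)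
    have hfx : f (∑ i', stdVec (b' i')) = W j + (f v - W (b i)) := by
      rw [hx]; simp [hWdef, map_add, map_sub]
    have : W j + (f v - W (b i)) < f v := by
      rw [← hfx]; exact lt_trans hlt huv
    linarith
  have keyle : ∀ i, ∀ j ∈ A i, W j ≤ W (b i) := by
    intro i j hj
    by_cases h : j = b i
    · exact le_of_eq (by rw [h])
    · exact le_of_lt (key i j hj h)
  -- build the ordered partition from level sets of W, ordered by decreasing value
  set V : Finset ℝ := Finset.image W Finset.univ with hVdef
  set k : ℕ := V.card with hkdef
  have hVk : V.card = k := rfl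
  set σ := V.orderIsoOfFin hVk with hσdef
  set P : Fin k → Finset (Fin d) :=
    fun a => Finset.univ.filter (fun j => W j = (σ a.rev : ℝ)) with hPdef
  have memV : ∀ j : Fin d, W j ∈ V := fun j =>
    Finset.mem_image_of_mem W (Finset.mem_univ j)
  have memP : ∀ (a : Fin k) (j : Fin d), j ∈ P a ↔ W j = (σ a.rev : ℝ) := by
    intro a j; simp [hPdef]
  refine ⟨k, P, b, ⟨?_, ?_, ?_⟩, ?_, hbv.symm⟩
  · -- nonempty parts
    intro a
    obtain ⟨j, _, hj⟩ := Finset.mem_image.mp (σ a.rev).2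
    exact ⟨j, (memP a j).mpr hj⟩
  · -- disjoint parts
    intro a c hac
    rw [Finset.disjoint_left]
    intro j hja hjc
    have h1 := (memP a j).mp hja
    have h2 := (memP c j).mp hjc
    have : σ a.rev = σ c.rev := Subtype.coe_injective (h1.symm.trans h2)
    exact hac (Fin.rev_injective (σ.injective this))
  · -- covering
    intro j
    refine ⟨(σ.symm ⟨W j, memV j⟩).rev, (memP _ j).mpr ?_⟩
    rw [Fin.rev_rev, OrderIso.apply_symm_apply]
  · -- refinement property
    intro i
    refine ⟨(σ.symm ⟨W (b i), memV (b i)⟩).rev, ?_, ?_, ?_⟩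
    · refine ⟨b i, Finset.mem_inter.mpr ⟨hb i, (memP _ (b i)).mpr ?_⟩⟩
      rw [Fin.rev_rev, OrderIso.apply_symm_apply]
    · intro c hc
      rw [Finset.eq_empty_iff_forall_notMem]
      intro j hjm
      obtain ⟨hj1, hj2⟩ := Finset.mem_inter.mp hjm
      have hWj := (memP _ j).mp hj2
      have hrev : (σ.symm ⟨W (b i), memV (b i)⟩).rev.rev < c.rev := Fin.rev_lt_rev.mpr hc
      have hmono : (σ (σ.symm ⟨W (b i), memV (b i)⟩).rev.rev : ℝ) < (σ c.rev : ℝ) :=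
        σ.strictMono hrev
      rw [Fin.rev_rev, OrderIso.apply_symm_apply] at hmono
      have : W (b i) < W j := by rw [hWj]; exact hmono
      exact absurd (keyle i j hj1) (not_le.mpr this)
    · ext j
      simp only [Finset.mem_singleton, Finset.mem_inter, memP]
      constructor
      · rintro rfl
        refine ⟨hb i, ?_⟩
        rw [Fin.rev_rev, OrderIso.apply_symm_apply]
      · rintro ⟨hj1, hj2⟩
        by_contra hne
        have h1 : W j < W (b i) := key i j hj1 hne
        rw [Fin.rev_rev, OrderIso.apply_symm_apply] at hj2
        exact absurd hj2 (ne_of_lt h1)
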